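/- Let F be a finite field with q = p^s elements and K ⊆ F a subfield with p^ℓ elements. Let m₁,…,m_n be positive integers and b₁,…,b_n ∈ F*. If ∑_{j=1}^n 1/gcd(m_j, p^ℓ - 1) > (q-1)/(p^ℓ - 1), then the equation b₁X₁^{m₁} + … + b_nX_n^{m_n} = 0 has a nontrivial solution with all X_j ∈ K. -/

import Mathlib

open scoped Classical

open scoped Pointwise
open Finset

lemma primeGain {r : ℕ} (hr : r.Prime) (A P : Finset (ZMod r))
    (h0A : (0 : ZMod r) ∈ A)
    (hd : ∀ μ ∈ A, ∀ lam ∈ P, μ + lam ≠ 0) :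
    P.card ≤ ((A + P) \ A).card := by
  haveI : NeZero r := ⟨hr.pos.ne'⟩
  have h0P : (0 : ZMod r) ∉ P := fun h => hd 0 h0A 0 h (add_zero 0)
  have hU : A + insert (0 : ZMod r) P = A ∪ (A + P) := by
    ext x
    simp only [Finset.mem_add, Finset.mem_insert, Finset.mem_union]
    constructor
    · rintro ⟨y, hy, z, (rfl | hz), rfl⟩
      · exact Or.inl (by simpa using hy)
      · exact Or.inr ⟨y, hy, z, hz, rfl⟩
    · rintro (hx | ⟨y, hy, z, hz, rfl⟩)
      · exact ⟨x, hx, 0, Or.inl rfl, add_zero x⟩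
      · exact ⟨y, hy, z, Or.inr hz, rfl⟩
  have hcd := ZMod.cauchy_davenport hr ⟨0, h0A⟩ (insert_nonempty 0 P)
  rw [hU] at hcd
  rw [card_insert_of_notMem h0P] at hcd
  have hsub : A ⊆ A ∪ (A + P) := subset_union_left
  have hsd : (A ∪ (A + P)) \ A = (A + P) \ A := by
    ext x; simp only [mem_sdiff, mem_union]; tauto
  have hcards : ((A + P) \ A).card + A.card = (A ∪ (A + P)).card := by
    rw [← hsd]; exact card_sdiff_add_card_eq_card hsub
  -- |A| + |P| ≤ r from disjointness of A and -P
  have hdisj : Disjoint A (P.image (fun x => -x)) := by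
    rw [disjoint_left]
    intro x hxA hxP
    obtain ⟨lam, hlam, rfl⟩ := mem_image.mp hxP
    exact hd _ hxA lam hlam (neg_add_cancel lam)
  have hAP : A.card + P.card ≤ r := by
    have := card_union_of_disjoint hdisj
    have hle : (A ∪ P.image (fun x => -x)).card ≤ Fintype.card (ZMod r) :=
      card_le_univ _
    rw [ZMod.card] at hle
    rw [card_image_of_injective _ neg_injective] at this
    omega
  rcases min_le_iff.mp hcd with h | h <;> omega

lemma lineGain {F : Type*} [Field F] [Fintype F] (W H : Finset F)
    (h0H : (0 : F) ∉ H) (hne : H.Nonempty)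
    (hdiv : ∀ a ∈ H, ∀ c ∈ H, a * c⁻¹ ∈ H)
    (h0W : (0 : F) ∈ W)
    (hno : ∀ w ∈ W, ∀ h ∈ H, w + h ≠ 0) :
    W.card + H.card ≤ (W ∪ Finset.image₂ (· + ·) W H).card := by
  set r := ringChar F with hrdef
  haveI : CharP F r := ringChar.charP F
  have hr : r.Prime := CharP.char_is_prime F r
  haveI : Fact r.Prime := ⟨hr⟩
  set φ : ZMod r →+* F := ZMod.castHom dvd_rfl F with hφdef
  have hφ : Function.Injective φ := (ZMod.castHom dvd_rfl F).injective
  -- basic H facts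
  have hH0 : ∀ h ∈ H, h ≠ 0 := fun h hh => fun e => h0H (e ▸ hh)
  have h1H : (1 : F) ∈ H := by
    obtain ⟨a, ha⟩ := hne
    have := hdiv a ha a ha
    rwa [mul_inv_cancel₀ (hH0 a ha)] at this
  have hinvH : ∀ h ∈ H, h⁻¹ ∈ H := fun h hh => by
    have := hdiv 1 h1H h hh; rwa [one_mul] at this
  have hmulH : ∀ a ∈ H, ∀ c ∈ H, a * c ∈ H := fun a ha c hc => by
    have := hdiv a ha c⁻¹ (hinvH c hc); rwa [inv_inv] at this
  -- lines
  set ell : F → Finset F := fun h => (univ : Finset (ZMod r)).image (fun μ => φ μ * h) with helldef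
  have hmemline : ∀ h : F, h ∈ ell h := fun h =>
    mem_image.mpr ⟨1, mem_univ 1, by rw [map_one, one_mul]⟩
  have h0line : ∀ h : F, (0 : F) ∈ ell h := fun h =>
    mem_image.mpr ⟨0, mem_univ 0, by rw [map_zero, zero_mul]⟩
  have hφne : ∀ μ : ZMod r, μ ≠ 0 → φ μ ≠ 0 := by
    intro μ hμ he
    exact hμ (hφ (by rw [he, map_zero]))
  have hline_eq : ∀ h x : F, x ∈ ell h → x ≠ 0 → ell x = ell h := by
    intro h x hx hx0
    obtain ⟨μ, _, rfl⟩ := mem_image.mp hx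
    have hμ0 : μ ≠ 0 := by rintro rfl; rw [map_zero, zero_mul] at hx0; exact hx0 rfl
    ext z
    simp only [helldef, mem_image, mem_univ, true_and]
    constructor
    · rintro ⟨ν, rfl⟩
      exact ⟨ν * μ, by rw [map_mul]; ring⟩
    · rintro ⟨ν, rfl⟩
      refine ⟨ν * μ⁻¹, ?_⟩
      rw [map_mul, map_inv₀]
      field_simp [hφne μ hμ0]
  set Lines : Finset (Finset F) := H.image ell with hLinesdef
  set U : Finset F := W ∪ Finset.image₂ (· + ·) W H with hUdef
  set T : Finset F := U \ W with hTdef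
  have h0T : (0 : F) ∉ T := fun h => (mem_sdiff.mp h).2 h0W
  -- pairwise line facts
  have hlines_ne0 : ∀ L ∈ Lines, ∀ x : F, x ≠ 0 → x ∈ L → ell x = L := by
    intro L hL x hx0 hxL
    obtain ⟨h, hh, rfl⟩ := mem_image.mp hL
    exact hline_eq h x hxL hx0
  -- partition of H into lines
  have hdisjH : ∀ L ∈ Lines, ∀ L' ∈ Lines, L ≠ L' →
      Disjoint (H.filter (· ∈ L)) (H.filter (· ∈ L')) := by
    intro L hL L' hL' hne'
    rw [disjoint_left]
    intro x hx hx'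
    obtain ⟨hxH, hxL⟩ := mem_filter.mp hx
    obtain ⟨_, hxL'⟩ := mem_filter.mp hx'
    exact hne' ((hlines_ne0 L hL x (hH0 x hxH) hxL).symm.trans
      (hlines_ne0 L' hL' x (hH0 x hxH) hxL'))
  have hHcard : H.card = ∑ L ∈ Lines, (H.filter (· ∈ L)).card := by
    rw [← card_biUnion hdisjH]
    congr 1
    ext x
    simp only [mem_biUnion, mem_filter]
    constructor
    · intro hx
      exact ⟨ell x, mem_image_of_mem ell hx, hx, hmemline x⟩
    · rintro ⟨L, _, hx, _⟩; exact hx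
  have hdisjT : ∀ L ∈ Lines, ∀ L' ∈ Lines, L ≠ L' →
      Disjoint (T.filter (· ∈ L)) (T.filter (· ∈ L')) := by
    intro L hL L' hL' hne'
    rw [disjoint_left]
    intro x hx hx'
    obtain ⟨hxT, hxL⟩ := mem_filter.mp hx
    obtain ⟨_, hxL'⟩ := mem_filter.mp hx'
    have hx0 : x ≠ 0 := fun e => h0T (e ▸ hxT)
    exact hne' ((hlines_ne0 L hL x hx0 hxL).symm.trans (hlines_ne0 L' hL' x hx0 hxL'))
  have hTcard : ∑ L ∈ Lines, (T.filter (· ∈ L)).card ≤ T.card := by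
    rw [← card_biUnion hdisjT]
    exact card_le_card (biUnion_subset.mpr fun L _ => filter_subset _ _)
  -- the common subgroup P of the prime field
  set P : Finset (ZMod r) := (univ : Finset (ZMod r)).filter (fun μ => φ μ ∈ H) with hPdef
  have h1P : (1 : ZMod r) ∈ P := mem_filter.mpr ⟨mem_univ _, by rw [map_one]; exact h1H⟩
  -- per-line inequality
  have hperline : ∀ L ∈ Lines, (H.filter (· ∈ L)).card ≤ (T.filter (· ∈ L)).card := by
    intro L hL
    obtain ⟨h₀, hh₀, rfl⟩ := mem_image.mp hL
    have hh₀0 : h₀ ≠ 0 := hH0 h₀ hh₀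
    have hψinj : Function.Injective (fun μ : ZMod r => φ μ * h₀) := by
      intro a c h
      exact hφ (mul_right_cancel₀ hh₀0 h)
    -- (a) count of H on the line
    have ha : H.filter (· ∈ ell h₀) = P.image (fun μ => φ μ * h₀) := by
      ext x
      simp only [mem_filter, mem_image, hPdef, mem_univ, true_and]
      constructor
      · rintro ⟨hxH, hxL⟩
        obtain ⟨μ, _, rfl⟩ := mem_image.mp hxL
        refine ⟨μ, ?_, rfl⟩
        have : φ μ * h₀ * h₀⁻¹ ∈ H := hdiv _ hxH _ hh₀
        rwa [mul_assoc, mul_inv_cancel₀ hh₀0, mul_one] at this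
      · rintro ⟨μ, hμ, rfl⟩
        exact ⟨hmulH _ hμ _ hh₀, mem_image.mpr ⟨μ, mem_univ _, rfl⟩⟩
    -- (b) the gains on the line
    set A : Finset (ZMod r) := (univ : Finset (ZMod r)).filter (fun μ => φ μ * h₀ ∈ W) with hAdef
    have h0A : (0 : ZMod r) ∈ A := mem_filter.mpr ⟨mem_univ _, by rw [map_zero, zero_mul]; exact h0W⟩
    have hdA : ∀ μ ∈ A, ∀ lam ∈ P, μ + lam ≠ 0 := by
      intro μ hμ lam hlam he
      have hw : φ μ * h₀ ∈ W := (mem_filter.mp hμ).2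
      have hlamH : φ lam ∈ H := (mem_filter.mp hlam).2
      have hhH : φ lam * h₀ ∈ H := hmulH _ hlamH _ hh₀
      refine hno _ hw _ hhH ?_
      have : φ (μ + lam) * h₀ = 0 := by rw [he, map_zero, zero_mul]
      rw [map_add, add_mul] at this
      exact this
    have hPA := primeGain hr A P h0A hdA
    have hgain : ((A + P) \ A).image (fun μ => φ μ * h₀) ⊆ T.filter (· ∈ ell h₀) := by
      intro x hx
      obtain ⟨μ, hμ, rfl⟩ := mem_image.mp hx
      obtain ⟨hμAP, hμA⟩ := mem_sdiff.mp hμ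
      obtain ⟨a, haA, lam, hlamP, rfl⟩ := Finset.mem_add.mp hμAP
      have hwa : φ a * h₀ ∈ W := (mem_filter.mp haA).2
      have hhl : φ lam * h₀ ∈ H := hmulH _ (mem_filter.mp hlamP).2 _ hh₀
      have hxU : φ (a + lam) * h₀ ∈ U := by
        rw [hUdef]
        refine mem_union_right _ (mem_image₂.mpr ⟨_, hwa, _, hhl, ?_⟩)
        rw [map_add, add_mul]
      have hxW : φ (a + lam) * h₀ ∉ W := fun hw =>
        hμA (mem_filter.mpr ⟨mem_univ _, hw⟩)
      refine mem_filter.mpr ⟨mem_sdiff.mpr ⟨hxU, hxW⟩, ?_⟩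
      exact mem_image.mpr ⟨a + lam, mem_univ _, rfl⟩
    calc (H.filter (· ∈ ell h₀)).card = P.card := by
          rw [ha, card_image_of_injective _ hψinj]
      _ ≤ ((A + P) \ A).card := hPA
      _ = (((A + P) \ A).image (fun μ => φ μ * h₀)).card :=
          (card_image_of_injective _ hψinj).symm
      _ ≤ (T.filter (· ∈ ell h₀)).card := card_le_card hgain
  -- put everything together
  have hHT : H.card ≤ T.card := by
    rw [hHcard]
    exact le_trans (sum_le_sum hperline) hTcard
  have hWU : W ⊆ U := subset_union_left
  have hT2 : T.card + W.card = U.card := by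
    rw [hTdef]; exact card_sdiff_add_card_eq_card hWU
  omega

lemma lineGainB {F : Type*} [Field F] [Fintype F] (W H : Finset F) (b : F) (hb : b ≠ 0)
    (h0H : (0 : F) ∉ H) (hne : H.Nonempty)
    (hdiv : ∀ a ∈ H, ∀ c ∈ H, a * c⁻¹ ∈ H)
    (h0W : (0 : F) ∈ W)
    (hno : ∀ w ∈ W, ∀ h ∈ H, w + b * h ≠ 0) :
    W.card + H.card ≤ (W ∪ Finset.image₂ (fun w h => w + b * h) W H).card := by
  have hbi : b⁻¹ ≠ 0 := inv_ne_zero hb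
  have hinj : Function.Injective (fun x : F => b⁻¹ * x) :=
    fun x y h => by
      have := congrArg (b * ·) h
      simpa [mul_assoc, mul_inv_cancel₀ hb, ← mul_assoc] using this
  set W' : Finset F := W.image (fun x => b⁻¹ * x) with hW'def
  have h0W' : (0 : F) ∈ W' := mem_image.mpr ⟨0, h0W, by rw [mul_zero]⟩
  have hno' : ∀ w ∈ W', ∀ h ∈ H, w + h ≠ 0 := by
    rintro w hw h hh he
    obtain ⟨w₀, hw₀, rfl⟩ := mem_image.mp hw
    refine hno w₀ hw₀ h hh ?_
    have := congrArg (b * ·) he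
    simp only [mul_add, mul_zero] at this
    rwa [← mul_assoc, mul_inv_cancel₀ hb, one_mul] at this
  have key : W' ∪ Finset.image₂ (· + ·) W' H
      = (W ∪ Finset.image₂ (fun w h => w + b * h) W H).image (fun x => b⁻¹ * x) := by
    ext x
    simp only [mem_union, mem_image, mem_image₂, hW'def]
    constructor
    · rintro (⟨w, hw, rfl⟩ | ⟨w', ⟨w, hw, rfl⟩, h, hh, rfl⟩)
      · exact ⟨w, Or.inl hw, rfl⟩
      · refine ⟨w + b * h, Or.inr ⟨w, hw, h, hh, rfl⟩, ?_⟩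
        rw [mul_add, ← mul_assoc, inv_mul_cancel₀ hb, one_mul]
    · rintro ⟨y, (hy | ⟨w, hw, h, hh, rfl⟩), rfl⟩
      · exact Or.inl ⟨y, hy, rfl⟩
      · refine Or.inr ⟨b⁻¹ * w, ⟨w, hw, rfl⟩, h, hh, ?_⟩
        rw [mul_add, ← mul_assoc, inv_mul_cancel₀ hb, one_mul]
  have h1 := lineGain W' H h0H hne hdiv h0W' hno'
  rw [key] at h1
  calc W.card + H.card = W'.card + H.card := by
        rw [hW'def, card_image_of_injective _ hinj]
    _ ≤ _ := h1
    _ = _ := card_image_of_injective _ hinj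

lemma subfield_pow_gcd_eq_one {F : Type*} [Field F] [Fintype F] (K : Subfield F) (y : F)
    (hy : y ∈ K) (hy0 : y ≠ 0) (mm : ℕ) (hym : y ^ mm = 1) :
    y ^ (Nat.gcd mm (Fintype.card ↥K - 1)) = 1 := by
  have hyK0 : (⟨y, hy⟩ : ↥K) ≠ 0 := by
    intro h
    exact hy0 (congrArg Subtype.val h)
  set u : (↥K)ˣ := Units.mk0 ⟨y, hy⟩ hyK0 with hu
  have h1 : u ^ mm = 1 := by
    ext
    push_cast [hu]
    exact_mod_cast congrArg Subtype.val (Subtype.ext hym : (⟨y, hy⟩ : ↥K) ^ mm = (1 : ↥K))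
  have h2 : u ^ (Fintype.card ↥K - 1) = 1 := by
    rw [← Fintype.card_units]
    exact pow_card_eq_one
  have h3 : u ^ Nat.gcd mm (Fintype.card ↥K - 1) = 1 :=
    orderOf_dvd_iff_pow_eq_one.mp
      (Nat.dvd_gcd (orderOf_dvd_of_pow_eq_one h1) (orderOf_dvd_of_pow_eq_one h2))
  have := congrArg (fun v : (↥K)ˣ => ((v : ↥K) : F)) h3
  simpa [hu] using this

/-- Theorem 3 (homogeneous case): nontrivial subfield solutions. -/
theorem stmt_17 (F : Type*) [Field F] [Fintype F] (p s ℓ q n : ℕ) (hp : p.Prime)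
    (hq : Fintype.card F = q) (hqs : q = p ^ s) (K : Subfield F)
    (hK : Fintype.card (K : Set F) = p ^ ℓ)
    (m : Fin n → ℕ) (hm : ∀ j, 0 < m j) (b : Fin n → F) (hb : ∀ j, b j ≠ 0)
    (hineq : ((q : ℚ) - 1) / ((p : ℚ) ^ ℓ - 1)
      < ∑ j, (1 : ℚ) / Nat.gcd (m j) (p ^ ℓ - 1)) :
    ∃ x : Fin n → F, x ≠ 0 ∧ (∀ j, x j ∈ K) ∧ ∑ j, b j * x j ^ m j = 0 := by
  set Q : ℕ := p ^ ℓ with hQdef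
  -- cardinality of K
  have hcardK : Fintype.card ↥K = Q := by
    rw [← hK]
    congr 1
  set d : Fin n → ℕ := fun j => Nat.gcd (m j) (Q - 1) with hddef
  have hdpos : ∀ j, 0 < d j := fun j => Nat.gcd_pos_of_pos_left _ (hm j)
  -- K as a finset
  set KS : Finset F := univ.filter (fun x => x ∈ K) with hKSdef
  have hKSmem : ∀ x : F, x ∈ KS ↔ x ∈ K := by
    intro x; simp [hKSdef]
  have hKScard : KS.card = Q := by
    rw [← hcardK, hKSdef]
    exact (Fintype.card_subtype _).symm
  have h0KS : (0 : F) ∈ KS := (hKSmem 0).mpr K.zero_mem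
  have hQ2 : 2 ≤ Q := by
    rw [← hcardK]
    haveI : Nontrivial ↥K := ⟨⟨0, 1, by
      intro h
      exact zero_ne_one (congrArg Subtype.val h)⟩⟩
    exact Fintype.one_lt_card
  -- the value sets
  set Hset : Fin n → Finset F := fun j => (KS.erase 0).image (· ^ m j) with hHsetdef
  have hHmem : ∀ j (h : F), h ∈ Hset j ↔ ∃ y, y ∈ K ∧ y ≠ 0 ∧ y ^ m j = h := by
    intro j h
    simp only [hHsetdef, mem_image, mem_erase, hKSmem]
    constructor
    · rintro ⟨y, ⟨hy0, hyK⟩, rfl⟩; exact ⟨y, hyK, hy0, rfl⟩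
    · rintro ⟨y, hyK, hy0, rfl⟩; exact ⟨y, ⟨hy0, hyK⟩, rfl⟩
  have hH0 : ∀ j, (0 : F) ∉ Hset j := by
    intro j h
    obtain ⟨y, _, hy0, hy⟩ := (hHmem j 0).mp h
    exact hy0 (pow_eq_zero_iff (hm j).ne' |>.mp hy)
  have hH1 : ∀ j, (1 : F) ∈ Hset j := by
    intro j
    exact (hHmem j 1).mpr ⟨1, K.one_mem, one_ne_zero, one_pow _⟩
  have hHdiv : ∀ j, ∀ a ∈ Hset j, ∀ c ∈ Hset j, a * c⁻¹ ∈ Hset j := by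
    intro j a ha c hc
    obtain ⟨y, hyK, hy0, rfl⟩ := (hHmem j a).mp ha
    obtain ⟨z, hzK, hz0, rfl⟩ := (hHmem j c).mp hc
    refine (hHmem j _).mpr ⟨y * z⁻¹, K.mul_mem hyK (K.inv_mem hzK),
      mul_ne_zero hy0 (inv_ne_zero hz0), ?_⟩
    rw [mul_pow, inv_pow]
  -- fiber bound and cardinality lower bound
  have hHle : ∀ j, Q - 1 ≤ d j * (Hset j).card := by
    intro j
    have hfib : ∀ a ∈ (KS.erase 0).image (· ^ m j),
        ((KS.erase 0).filter (fun x => x ^ m j = a)).card ≤ d j := by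
      intro a ha
      obtain ⟨x₀, hx₀, rfl⟩ := mem_image.mp ha
      obtain ⟨hx₀0, hx₀K⟩ := mem_erase.mp hx₀
      rw [hKSmem] at hx₀K
      have hx₀ne : x₀ ^ m j ≠ 0 := pow_ne_zero _ hx₀0
      set R : Finset F := (Polynomial.nthRoots (d j) (1 : F)).toFinset with hRdef
      have hmap : ∀ x ∈ (KS.erase 0).filter (fun x => x ^ m j = x₀ ^ m j),
          x * x₀⁻¹ ∈ R := by
        intro x hx
        obtain ⟨hx1, hx2⟩ := mem_filter.mp hx
        obtain ⟨hx0, hxK⟩ := mem_erase.mp hx1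
        rw [hKSmem] at hxK
        have hyK : x * x₀⁻¹ ∈ K := K.mul_mem hxK (K.inv_mem hx₀K)
        have hy0 : x * x₀⁻¹ ≠ 0 := mul_ne_zero hx0 (inv_ne_zero hx₀0)
        have hym : (x * x₀⁻¹) ^ m j = 1 := by
          rw [mul_pow, inv_pow, hx2, mul_inv_cancel₀ hx₀ne]
        have := subfield_pow_gcd_eq_one K _ hyK hy0 (m j) hym
        rw [hcardK] at this
        rw [hRdef, Multiset.mem_toFinset, Polynomial.mem_nthRoots (hdpos j)]
        exact this
      have hinj : Set.InjOn (fun x => x * x₀⁻¹)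
          ((KS.erase 0).filter (fun x => x ^ m j = x₀ ^ m j) : Set F) := by
        intro x _ y _ h
        exact mul_right_cancel₀ (inv_ne_zero hx₀0) h
      have h1 := Finset.card_le_card_of_injOn _ hmap hinj
      have h2 : R.card ≤ d j :=
        le_trans (Multiset.toFinset_card_le _) (Polynomial.card_nthRoots _ _)
      exact le_trans h1 h2
    have := Finset.card_le_mul_card_image (KS.erase 0) (d j) hfib
    rwa [card_erase_of_mem h0KS, hKScard] at this
  -- the counting inequality
  have hQQ : ((p : ℚ)) ^ ℓ = ((Q : ℕ) : ℚ) := by rw [hQdef]; push_cast; ring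
  have hQ1pos : (0 : ℚ) < (Q : ℚ) - 1 := by
    have : (2 : ℚ) ≤ (Q : ℚ) := by exact_mod_cast hQ2
    linarith
  have hqS : q ≤ ∑ j, (Hset j).card := by
    have h1 : ∀ j, (1 : ℚ) / (d j) ≤ ((Hset j).card : ℚ) / ((Q : ℚ) - 1) := by
      intro j
      rw [div_le_div_iff₀ (by exact_mod_cast hdpos j) hQ1pos]
      have hc : ((Q - 1 : ℕ) : ℚ) ≤ ((d j * (Hset j).card : ℕ) : ℚ) :=
        Nat.cast_le.mpr (hHle j)
      rw [Nat.cast_sub (by omega), Nat.cast_mul] at hc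
      push_cast at hc ⊢
      nlinarith
    have h2 : ((q : ℚ) - 1) / ((Q : ℚ) - 1) < ∑ j, (1 : ℚ) / (d j) := by
      rw [← hQQ]; exact hineq
    have h3 : (q : ℚ) - 1 < (∑ j, (1 : ℚ) / (d j)) * ((Q : ℚ) - 1) :=
      (div_lt_iff₀ hQ1pos).mp h2
    have h4 : (∑ j, (1 : ℚ) / (d j)) * ((Q : ℚ) - 1)
        ≤ (∑ j, ((Hset j).card : ℚ) / ((Q : ℚ) - 1)) * ((Q : ℚ) - 1) :=
      mul_le_mul_of_nonneg_right (sum_le_sum fun j _ => h1 j) hQ1pos.le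
    have h5 : (∑ j, ((Hset j).card : ℚ) / ((Q : ℚ) - 1)) * ((Q : ℚ) - 1)
        = ∑ j, ((Hset j).card : ℚ) := by
      rw [sum_mul]
      exact sum_congr rfl fun j _ => div_mul_cancel₀ _ hQ1pos.ne'
    have h6 : (q : ℚ) - 1 < ∑ j, ((Hset j).card : ℚ) := by linarith
    have h7 : (q : ℚ) < ((∑ j, (Hset j).card : ℕ) : ℚ) + 1 := by
      push_cast
      linarith
    have h8 : q < (∑ j, (Hset j).card) + 1 := by exact_mod_cast h7
    omega
  -- sum update helper
  have hsum_update : ∀ (x : Fin n → F) (j₀ : Fin n) (y : F), x j₀ = 0 →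
      ∑ i, b i * (Function.update x j₀ y i) ^ m i
        = (∑ i, b i * x i ^ m i) + b j₀ * y ^ m j₀ := by
    intro x j₀ y hx0
    have e1 : ∑ i ∈ univ.erase j₀, b i * (Function.update x j₀ y i) ^ m i
        = ∑ i ∈ univ.erase j₀, b i * x i ^ m i :=
      Finset.sum_congr rfl fun i hi => by
        rw [Function.update_of_ne (Finset.ne_of_mem_erase hi)]
    have e2 : ∑ i, b i * x i ^ m i = ∑ i ∈ univ.erase j₀, b i * x i ^ m i := by
      rw [← Finset.add_sum_erase _ _ (mem_univ j₀), hx0, zero_pow (hm j₀).ne',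
        mul_zero, zero_add]
    rw [e2, ← Finset.add_sum_erase _ _ (mem_univ j₀), Function.update_self, e1, add_comm]
  -- main induction
  have main : ∀ k, k ≤ n →
      (∃ x : Fin n → F, x ≠ 0 ∧ (∀ j, x j ∈ K) ∧ ∑ j, b j * x j ^ m j = 0) ∨
      ∃ W : Finset F, (0 : F) ∈ W ∧
        (∀ w ∈ W, ∃ x : Fin n → F, (∀ j, x j ∈ K) ∧ (∀ j : Fin n, k ≤ (j : ℕ) → x j = 0) ∧
          w = ∑ j, b j * x j ^ m j) ∧
        1 + ∑ j ∈ univ.filter (fun j : Fin n => (j : ℕ) < k), (Hset j).card ≤ W.card := by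
    intro k
    induction k with
    | zero =>
      intro _
      right
      refine ⟨{0}, mem_singleton_self 0, ?_, ?_⟩
      · intro w hw
        rw [mem_singleton] at hw
        refine ⟨fun _ => 0, fun j => K.zero_mem, fun j _ => rfl, ?_⟩
        rw [hw]
        simp [zero_pow, (hm _).ne']
      · have : univ.filter (fun j : Fin n => (j : ℕ) < 0) = ∅ := by
          apply filter_false_of_mem; intro j _; omega
        rw [this, sum_empty, card_singleton]
        omega
    | succ k ih =>
      intro hk1
      rcases ih (Nat.le_of_succ_le hk1) with sol | ⟨W, h0W, hreps, hcard⟩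
      · exact Or.inl sol
      · have hkn : k < n := hk1
        set j₀ : Fin n := ⟨k, hkn⟩ with hj₀def
        by_cases hc : ∃ w ∈ W, ∃ h ∈ Hset j₀, w + b j₀ * h = 0
        · left
          obtain ⟨w, hw, h, hh, heq⟩ := hc
          obtain ⟨x, hxK, hxsupp, rfl⟩ := hreps w hw
          obtain ⟨y, hyK, hy0, rfl⟩ := (hHmem j₀ h).mp hh
          have hxj₀ : x j₀ = 0 := hxsupp j₀ (le_refl k)
          refine ⟨Function.update x j₀ y, ?_, ?_, ?_⟩
          · intro hzero
            apply hy0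
            have := congrFun hzero j₀
            rwa [Function.update_self] at this
          · intro i
            rcases eq_or_ne i j₀ with rfl | hne'
            · rwa [Function.update_self]
            · rw [Function.update_of_ne hne']; exact hxK i
          · rw [hsum_update x j₀ y hxj₀]
            exact heq
        · right
          push_neg at hc
          refine ⟨W ∪ Finset.image₂ (fun w h => w + b j₀ * h) W (Hset j₀),
            mem_union_left _ h0W, ?_, ?_⟩
          · intro w' hw'
            rcases mem_union.mp hw' with hw' | hw'
            · obtain ⟨x, hxK, hxsupp, rfl⟩ := hreps w' hw'
              exact ⟨x, hxK, fun j hj => hxsupp j (by omega), rfl⟩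
            · obtain ⟨w, hw, h, hh, rfl⟩ := mem_image₂.mp hw'
              obtain ⟨x, hxK, hxsupp, rfl⟩ := hreps w hw
              obtain ⟨y, hyK, hy0, rfl⟩ := (hHmem j₀ h).mp hh
              have hxj₀ : x j₀ = 0 := hxsupp j₀ (le_refl k)
              refine ⟨Function.update x j₀ y, ?_, ?_, (hsum_update x j₀ y hxj₀).symm⟩
              · intro i
                rcases eq_or_ne i j₀ with rfl | hne'
                · rwa [Function.update_self]
                · rw [Function.update_of_ne hne']; exact hxK i
              · intro j hj
                have hj₀val : (j₀ : ℕ) = k := rfl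
                have hjne : j ≠ j₀ := by
                  intro e
                  rw [e, hj₀val] at hj
                  omega
                rw [Function.update_of_ne hjne]
                exact hxsupp j (by omega)
          · have hgrow := lineGainB W (Hset j₀) (b j₀) (hb j₀) (hH0 j₀) ⟨1, hH1 j₀⟩
              (hHdiv j₀) h0W (by
                intro w hw h hh
                exact hc w hw h hh)
            have hfilter : univ.filter (fun j : Fin n => (j : ℕ) < k + 1)
                = insert j₀ (univ.filter (fun j : Fin n => (j : ℕ) < k)) := by
              ext jj
              simp only [mem_filter, mem_univ, true_and, mem_insert]
              rw [Fin.ext_iff, hj₀def]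
              show (jj : ℕ) < k + 1 ↔ (jj : ℕ) = k ∨ (jj : ℕ) < k
              omega
            rw [hfilter, sum_insert (by simp; exact le_refl k)]
            omega
  rcases main n le_rfl with sol | ⟨W, _, _, hcard⟩
  · exact sol
  · exfalso
    have hWle : W.card ≤ q := by
      rw [← hq, ← card_univ]
      exact card_le_univ W
    have hfull : univ.filter (fun j : Fin n => (j : ℕ) < n) = univ := by
      apply filter_true_of_mem
      intro j _
      exact j.isLt
    rw [hfull] at hcard
    omega
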